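/- (Fold lemma) If u ≠ v are vertices of a finite graph G with N(v) ⊆ N(u), then c(G) ≤ c(G \ u). -/

import Mathlib

open Classical

variable {V : Type*}

/-- A finset of vertices is independent if no two of its members are adjacent. -/
def IsIndepSet (G : SimpleGraph V) (s : Finset V) : Prop :=
  ∀ u ∈ s, ∀ v ∈ s, ¬ G.Adj u v

/-- The set of faces of the independence complex of `G` (including the empty face). -/
def IndFaces (G : SimpleGraph V) : Set (Finset V) :=
  {s | IsIndepSet G s}

/-- `P` is a matching on the face poset `Δ`: a set of disjoint covering pairs. -/
def IsPosetMatching (Δ : Set (Finset V)) (P : Set (Finset V × Finset V)) : Prop :=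
  (∀ p ∈ P, p.1 ∈ Δ ∧ p.2 ∈ Δ ∧ p.1 ⊆ p.2 ∧ p.2.card = p.1.card + 1) ∧
  (∀ p ∈ P, ∀ q ∈ P, p ≠ q → p.1 ≠ q.1 ∧ p.1 ≠ q.2 ∧ p.2 ≠ q.1 ∧ p.2 ≠ q.2)

/-- A cycle in a matching: distinct matched pairs `{σ₁⊂τ₁},…,{σₙ⊂τₙ}`, `n > 1`,
with `σ_{i+1} ⊂ τ_i` for `i < n` and `σ₁ ⊂ τₙ`. -/
def MatchingHasCycle (P : Set (Finset V × Finset V)) : Prop :=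
  ∃ n : ℕ, 2 ≤ n ∧ ∃ f : ℕ → Finset V × Finset V,
    (∀ i < n, f i ∈ P) ∧ Set.InjOn f (Set.Iio n) ∧
    (∀ i, i + 1 < n → (f (i + 1)).1 ⊂ (f i).2) ∧ (f 0).1 ⊂ (f (n - 1)).2

/-- An acyclic (Morse) matching on the face poset `Δ`. -/
def IsAcyclicMatching (Δ : Set (Finset V)) (P : Set (Finset V × Finset V)) : Prop :=
  IsPosetMatching Δ P ∧ ¬ MatchingHasCycle P

/-- The critical (unmatched) faces of `Δ` with respect to `P`. -/
def criticalSet (Δ : Set (Finset V)) (P : Set (Finset V × Finset V)) : Set (Finset V) :=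
  {s ∈ Δ | ∀ p ∈ P, s ≠ p.1 ∧ s ≠ p.2}

/-- `cInvariant G` is the minimal number of critical cells in an acyclic matching on the
face poset of the independence complex of `G`. -/
noncomputable def cInvariant (G : SimpleGraph V) : ℕ :=
  sInf {n | ∃ P, IsAcyclicMatching (IndFaces G) P ∧ (criticalSet (IndFaces G) P).ncard = n}

/-- The fold lemma: if `u ≠ v` and `N(v) ⊆ N(u)`, then `c(G) ≤ c(G \ u)`. -/
theorem statement_4 {V : Type*} [Finite V] (G : SimpleGraph V) (u v : V)
    (hne : u ≠ v) (h : G.neighborSet v ⊆ G.neighborSet u) :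
    cInvariant G ≤ cInvariant (G.induce {w | w ≠ u}) := by
  classical
  set S : Set V := {w | w ≠ u} with hS
  set G' := G.induce S with hG'
  set e : S ↪ V := Function.Embedding.subtype _ with he
  set M : Finset ↥S → Finset V := fun t => t.map e with hM
  have hMinj : Function.Injective M := fun a b hab => Finset.map_injective e hab
  have hunotM : ∀ t : Finset ↥S, u ∉ M t := by
    intro t ht
    simp only [hM, Finset.mem_map] at ht
    obtain ⟨x, _, hx⟩ := ht
    exact x.2 hx
  have hindep : ∀ t : Finset ↥S, (M t ∈ IndFaces G ↔ t ∈ IndFaces G') := by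
    intro t
    constructor
    · intro H a ha b hb hab
      exact H a.1 (Finset.mem_map_of_mem e ha) b.1 (Finset.mem_map_of_mem e hb) hab
    · intro H a ha b hb hab
      simp only [hM, Finset.mem_map] at ha hb
      obtain ⟨a', ha', rfl⟩ := ha
      obtain ⟨b', hb', rfl⟩ := hb
      exact H a' ha' b' hb' hab
  have hsub : ∀ s : Finset V, u ∉ s → M (s.subtype (· ∈ S)) = s := by
    intro s hus
    rw [hM]
    show (s.subtype (· ∈ S)).map (Function.Embedding.subtype _) = s
    rw [Finset.subtype_map]
    apply Finset.filter_true_of_mem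
    intro x hx hxu
    exact hus (hxu ▸ hx)
  have hmono : ∀ s t : Finset V, t ⊆ s → IsIndepSet G s → IsIndepSet G t :=
    fun s t hts hs a ha b hb => hs a (hts ha) b (hts hb)
  have hins : ∀ s : Finset V, IsIndepSet G s → u ∈ s → IsIndepSet G (insert v s) := by
    intro s hs hu a ha b hb hab
    have key : ∀ w ∈ s, ¬ G.Adj v w := by
      intro w hw hvw
      exact hs u hu w hw (h hvw)
    simp only [Finset.mem_insert] at ha hb
    rcases ha with rfl | ha
    · rcases hb with rfl | hb
      · exact G.loopless.irrefl _ hab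
      · exact key b hb hab
    · rcases hb with rfl | hb
      · exact key a ha (G.adj_symm hab)
      · exact hs a ha b hb hab
  -- an optimal matching on G'
  have hTne : ({n | ∃ P, IsAcyclicMatching (IndFaces G') P ∧
      (criticalSet (IndFaces G') P).ncard = n}).Nonempty := by
    refine ⟨_, ∅, ⟨⟨fun p hp => absurd hp (Set.notMem_empty p),
      fun p hp => absurd hp (Set.notMem_empty p)⟩, ?_⟩, rfl⟩
    rintro ⟨n, hn2, f, hf, -⟩
    exact Set.notMem_empty _ (hf 0 (by omega))
  obtain ⟨P', hP'ac, hP'card⟩ := Nat.sInf_mem hTne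
  set Q1 : Set (Finset V × Finset V) :=
    (fun p : Finset ↥S × Finset ↥S => (M p.1, M p.2)) '' P' with hQ1
  set Q2 : Set (Finset V × Finset V) :=
    {p | ∃ s : Finset V, IsIndepSet G s ∧ u ∈ s ∧ v ∉ s ∧ p = (s, insert v s)} with hQ2
  set P : Set (Finset V × Finset V) := Q1 ∪ Q2 with hPdef
  have hQ1u : ∀ p ∈ Q1, u ∉ p.1 ∧ u ∉ p.2 := by
    rintro p ⟨q, hq, rfl⟩
    exact ⟨hunotM q.1, hunotM q.2⟩
  have hQ2u : ∀ p ∈ Q2, u ∈ p.1 ∧ u ∈ p.2 := by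
    rintro p ⟨s, hs, hus, hvs, rfl⟩
    exact ⟨hus, Finset.mem_insert_of_mem hus⟩
  have hP'm := hP'ac.1
  -- matching property
  have hPmatch : IsPosetMatching (IndFaces G) P := by
    constructor
    · rintro p (⟨q, hq, rfl⟩ | ⟨s, hs, hus, hvs, rfl⟩)
      · obtain ⟨h1, h2, h3, h4⟩ := hP'm.1 q hq
        refine ⟨(hindep _).2 h1, (hindep _).2 h2, Finset.map_subset_map.2 h3, ?_⟩
        simp only [hM, Finset.card_map]
        exact h4
      · exact ⟨hs, hins s hs hus, Finset.subset_insert _ _,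
          Finset.card_insert_of_notMem hvs⟩
    · rintro p hp q hq hpq
      rcases hp with ⟨a, ha, rfl⟩ | ⟨s, hs, hus, hvs, rfl⟩
      · rcases hq with ⟨b, hb, rfl⟩ | ⟨t, ht, hut, hvt, rfl⟩
        · have hab : a ≠ b := fun hEq => hpq (by rw [hEq])
          obtain ⟨h1, h2, h3, h4⟩ := hP'm.2 a ha b hb hab
          exact ⟨fun hEq => h1 (hMinj hEq), fun hEq => h2 (hMinj hEq),
            fun hEq => h3 (hMinj hEq), fun hEq => h4 (hMinj hEq)⟩
        · refine ⟨fun hEq => hunotM a.1 ?_, fun hEq => hunotM a.1 ?_,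
            fun hEq => hunotM a.2 ?_, fun hEq => hunotM a.2 ?_⟩
          · rw [show M a.1 = t from hEq]; exact hut
          · rw [show M a.1 = insert v t from hEq]; exact Finset.mem_insert_of_mem hut
          · rw [show M a.2 = t from hEq]; exact hut
          · rw [show M a.2 = insert v t from hEq]; exact Finset.mem_insert_of_mem hut
      · rcases hq with ⟨b, hb, rfl⟩ | ⟨t, ht, hut, hvt, rfl⟩
        · refine ⟨fun hEq => hunotM b.1 ?_, fun hEq => hunotM b.2 ?_,
            fun hEq => hunotM b.1 ?_, fun hEq => hunotM b.2 ?_⟩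
          · rw [← show s = M b.1 from hEq]; exact hus
          · rw [← show s = M b.2 from hEq]; exact hus
          · rw [← show insert v s = M b.1 from hEq]; exact Finset.mem_insert_of_mem hus
          · rw [← show insert v s = M b.2 from hEq]; exact Finset.mem_insert_of_mem hus
        · have hst : s ≠ t := by
            intro hEq; subst hEq; exact hpq rfl
          refine ⟨hst, ?_, ?_, ?_⟩
          · intro hEq
            apply hvs
            rw [show s = insert v t from hEq]
            exact Finset.mem_insert_self v t
          · intro hEq
            apply hvt
            rw [← show insert v s = t from hEq]
            exact Finset.mem_insert_self v s
          · intro hEq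
            apply hst
            rw [← Finset.erase_insert hvs, ← Finset.erase_insert hvt,
              show insert v s = insert v t from hEq]
  -- acyclicity
  have hPacyc : ¬ MatchingHasCycle P := by
    rintro ⟨n, hn2, f, hfP, hfinj, hfstep, hfwrap⟩
    have hstepQ2 : ∀ i, i + 1 < n → f (i + 1) ∈ Q2 → f i ∈ Q2 := by
      intro i hi hfi1
      rcases hfP i (by omega) with hQ | hQ
      · exact absurd ((hfstep i hi).subset (hQ2u _ hfi1).1) (hQ1u _ hQ).2
      · exact hQ
    have hwrapQ2 : f 0 ∈ Q2 → f (n - 1) ∈ Q2 := by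
      intro h0
      rcases hfP (n - 1) (by omega) with hQ | hQ
      · exact absurd (hfwrap.subset (hQ2u _ h0).1) (hQ1u _ hQ).2
      · exact hQ
    have hback : ∀ k, k < n → f k ∈ Q2 → ∀ i ≤ k, f i ∈ Q2 := by
      intro k
      induction k with
      | zero =>
        intro _ hfk i hi
        have : i = 0 := by omega
        subst this; exact hfk
      | succ k ih =>
        intro hk hfk i hi
        rcases Nat.lt_or_ge i (k + 1) with hlt | hge
        · exact ih (by omega) (hstepQ2 k hk hfk) i (by omega)
        · have : i = k + 1 := by omega
          subst this; exact hfk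
    by_cases hall : ∀ i < n, f i ∈ Q2
    · have hσ : ∀ i, i < n → u ∈ (f i).1 ∧ v ∉ (f i).1 ∧ (f i).2 = insert v (f i).1 := by
        intro i hi
        obtain ⟨s, _, hus, hvs, hEq⟩ := hall i hi
        rw [hEq]; exact ⟨hus, hvs, rfl⟩
      have hstep' : ∀ i, i + 1 < n → (f (i + 1)).1 ⊆ (f i).1 := by
        intro i hi x hx
        have hsubx : x ∈ insert v (f i).1 := by
          have hx2 := (hfstep i hi).subset hx
          rwa [(hσ i (by omega)).2.2] at hx2
        rcases Finset.mem_insert.1 hsubx with rfl | hx'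
        · exact absurd hx (hσ (i + 1) hi).2.1
        · exact hx'
      have hdec : ∀ j, j < n → ∀ i ≤ j, (f j).1 ⊆ (f i).1 := by
        intro j
        induction j with
        | zero =>
          intro _ i hi
          have : i = 0 := by omega
          subst this; exact subset_rfl
        | succ j ih =>
          intro hj i hi
          rcases Nat.lt_or_ge i (j + 1) with hlt | hge
          · exact (hstep' j hj).trans (ih (by omega) i (by omega))
          · have : i = j + 1 := by omega
            subst this; exact subset_rfl
      have hwrap' : (f 0).1 ⊆ (f (n - 1)).1 := by
        intro x hx
        have hsubx : x ∈ insert v (f (n - 1)).1 := by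
          have hx2 := hfwrap.subset hx
          rwa [(hσ (n - 1) (by omega)).2.2] at hx2
        rcases Finset.mem_insert.1 hsubx with rfl | hx'
        · exact absurd hx (hσ 0 (by omega)).2.1
        · exact hx'
      have h01 : (f 0).1 = (f 1).1 := by
        apply Finset.Subset.antisymm
        · exact hwrap'.trans (hdec (n - 1) (by omega) 1 (by omega))
        · exact hstep' 0 (by omega)
      have hf01 : f 0 = f 1 := by
        have h2 : (f 0).2 = (f 1).2 := by
          rw [(hσ 0 (by omega)).2.2, (hσ 1 (by omega)).2.2, h01]
        exact Prod.ext h01 h2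
      have h0eq1 : (0 : ℕ) = 1 :=
        hfinj (Set.mem_Iio.2 (by omega)) (Set.mem_Iio.2 (by omega)) hf01
      omega
    · push_neg at hall
      obtain ⟨j, hj, hjQ2⟩ := hall
      have hall1 : ∀ i, i < n → f i ∈ Q1 := by
        intro i hi
        rcases hfP i hi with hQ | hQ
        · exact hQ
        · exact absurd (hback (n - 1) (by omega) (hwrapQ2 (hback i hi hQ 0 (by omega)))
            j (by omega)) hjQ2
      have hex : ∀ i, i < n → ∃ q, q ∈ P' ∧ (M q.1, M q.2) = f i := by
        intro i hi
        obtain ⟨q, hq, hEq⟩ := hall1 i hi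
        exact ⟨q, hq, hEq⟩
      set g : ℕ → Finset ↥S × Finset ↥S :=
        fun i => if hi : i < n then (hex i hi).choose else (∅, ∅) with hg
      have hgspec : ∀ i, i < n → (g i ∈ P' ∧ (M (g i).1, M (g i).2) = f i) := by
        intro i hi
        have hgi : g i = (hex i hi).choose := by rw [hg]; simp [hi]
        rw [hgi]
        exact (hex i hi).choose_spec
      apply hP'ac.2
      refine ⟨n, hn2, g, fun i hi => (hgspec i hi).1, ?_, ?_, ?_⟩
      · intro i hi j' hj' hEq
        apply hfinj hi hj'
        rw [← (hgspec i hi).2, ← (hgspec j' hj').2, hEq]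
      · intro i hi
        rw [← Finset.map_ssubset_map (f := e)]
        have h1 : M (g (i + 1)).1 = (f (i + 1)).1 := congrArg Prod.fst (hgspec (i + 1) hi).2
        have h2 : M (g i).2 = (f i).2 := congrArg Prod.snd (hgspec i (by omega)).2
        show M (g (i + 1)).1 ⊂ M (g i).2
        rw [h1, h2]; exact hfstep i hi
      · rw [← Finset.map_ssubset_map (f := e)]
        have h1 : M (g 0).1 = (f 0).1 := congrArg Prod.fst (hgspec 0 (by omega)).2
        have h2 : M (g (n - 1)).2 = (f (n - 1)).2 :=
          congrArg Prod.snd (hgspec (n - 1) (by omega)).2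
        show M (g 0).1 ⊂ M (g (n - 1)).2
        rw [h1, h2]; exact hfwrap
  -- critical sets correspond
  have hcrit : criticalSet (IndFaces G) P = M '' criticalSet (IndFaces G') P' := by
    ext s
    constructor
    · rintro ⟨hsInd, hscrit⟩
      have hus : u ∉ s := by
        intro hus
        by_cases hvs : v ∈ s
        · have hp : ((s.erase v, s) : Finset V × Finset V) ∈ P := by
            refine Or.inr ⟨s.erase v, hmono s _ (Finset.erase_subset _ _) hsInd,
              Finset.mem_erase.2 ⟨hne, hus⟩, Finset.notMem_erase _ _, ?_⟩
            rw [Finset.insert_erase hvs]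
          exact (hscrit _ hp).2 rfl
        · have hp : ((s, insert v s) : Finset V × Finset V) ∈ P :=
            Or.inr ⟨s, hsInd, hus, hvs, rfl⟩
          exact (hscrit _ hp).1 rfl
      refine ⟨s.subtype (· ∈ S), ⟨?_, ?_⟩, hsub s hus⟩
      · apply (hindep _).1
        rw [hsub s hus]; exact hsInd
      · intro q hq
        have hPq : ((M q.1, M q.2) : Finset V × Finset V) ∈ P := Or.inl ⟨q, hq, rfl⟩
        obtain ⟨h1, h2⟩ := hscrit _ hPq
        constructor
        · intro hEq; exact h1 (by rw [← hsub s hus, hEq])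
        · intro hEq; exact h2 (by rw [← hsub s hus, hEq])
    · rintro ⟨t, ⟨htInd, htcrit⟩, rfl⟩
      refine ⟨(hindep t).2 htInd, ?_⟩
      rintro p (⟨q, hq, rfl⟩ | ⟨s', hs', hus', hvs', rfl⟩)
      · exact ⟨fun hEq => (htcrit q hq).1 (hMinj hEq), fun hEq => (htcrit q hq).2 (hMinj hEq)⟩
      · refine ⟨fun hEq => hunotM t ?_, fun hEq => hunotM t ?_⟩
        · rw [hEq]; exact hus'
        · rw [hEq]; exact Finset.mem_insert_of_mem hus'
  apply Nat.sInf_le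
  refine ⟨P, ⟨hPmatch, hPacyc⟩, ?_⟩
  rw [hcrit, Set.ncard_image_of_injective _ hMinj]
  exact hP'card
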